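/- Every improving k-swap strictly decreases the potential: if there is an improving k-swap from σ to σ', then Φ(σ') < Φ(σ). -/

import Mathlib

open Finset

/-- The load of machine `i` under schedule `σ` with processing times `p`. -/
noncomputable def load {n m : ℕ} (p : Fin n → ℝ) (σ : Fin n → Fin m) (i : Fin m) : ℝ :=
  ∑ j ∈ Finset.univ.filter (fun j => σ j = i), p j

/-- The makespan (maximum machine load) of schedule `σ`. -/
noncomputable def Lmax {n m : ℕ} (p : Fin n → ℝ) (σ : Fin n → Fin m) : ℝ :=
  ⨆ i, load p σ i

/-- `δ_min`: the minimum of `|p(A) - p(B)|` over disjoint finsets of jobs `A`, `B`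
with `1 ≤ |A| + |B| ≤ k`. -/
noncomputable def deltaMin (n k : ℕ) (p : Fin n → ℝ) : ℝ :=
  sInf { x | ∃ A B : Finset (Fin n), Disjoint A B ∧ 1 ≤ A.card + B.card ∧
    A.card + B.card ≤ k ∧ x = |∑ j ∈ A, p j - ∑ j ∈ B, p j| }

/-- An improving `k`-swap from `σ` to `σ'`, with critical machine `i`, machine `i' ≠ i`,
and disjoint job sets `A ⊆ σ⁻¹ {i}`, `B ⊆ σ⁻¹ {i'}` with `|A| ≥ 1`, `|A| + |B| ≤ k` and
`0 < p(A) - p(B) < L_i(σ) - L_{i'}(σ)`; `σ'` sends `A` to `i'`, `B` to `i`, and agrees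
with `σ` elsewhere. -/
def IsImprovingKSwap (k : ℕ) {n m : ℕ} (p : Fin n → ℝ) (σ σ' : Fin n → Fin m)
    (i i' : Fin m) (A B : Finset (Fin n)) : Prop :=
  load p σ i = Lmax p σ ∧
  i' ≠ i ∧
  Disjoint A B ∧
  (∀ j ∈ A, σ j = i) ∧ (∀ j ∈ B, σ j = i') ∧
  1 ≤ A.card ∧ A.card + B.card ≤ k ∧
  0 < (∑ j ∈ A, p j) - ∑ j ∈ B, p j ∧
  (∑ j ∈ A, p j) - (∑ j ∈ B, p j) < load p σ i - load p σ i' ∧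
  (∀ j ∈ A, σ' j = i') ∧ (∀ j ∈ B, σ' j = i) ∧
  ∀ j, j ∉ A → j ∉ B → σ' j = σ j

/-- The set `γ_s(σ)` of machines whose load is at most `L_max(σ) - δ_min`. -/
noncomputable def gammaS (k : ℕ) {n m : ℕ} (p : Fin n → ℝ) (σ : Fin n → Fin m) :
    Finset (Fin m) :=
  Finset.univ.filter (fun i => load p σ i ≤ Lmax p σ - deltaMin n k p)

/-- The potential `Φ(σ) = ∑_{(i,i')} |L_i(σ) - L_{i'}(σ)|` over ordered pairs of machines. -/
noncomputable def potential {n m : ℕ} (p : Fin n → ℝ) (σ : Fin n → Fin m) : ℝ :=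
  ∑ i : Fin m, ∑ i' : Fin m, |load p σ i - load p σ i'|


lemma key_abs (a b c d : ℝ) (hd : 0 < d) (hdb : d < a - b) :
    |a - d - c| + |b + d - c| ≤ |a - c| + |b - c| := by
  rcases abs_cases (a - c) with ⟨h1,h1'⟩|⟨h1,h1'⟩ <;>
  rcases abs_cases (b - c) with ⟨h2,h2'⟩|⟨h2,h2'⟩ <;>
  rcases abs_cases (a - d - c) with ⟨h3,h3'⟩|⟨h3,h3'⟩ <;>
  rcases abs_cases (b + d - c) with ⟨h4,h4'⟩|⟨h4,h4'⟩ <;>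
  linarith

lemma key_strict (a b d : ℝ) (hd : 0 < d) (hdb : d < a - b) :
    |a - d - (b + d)| < |a - b| := by
  rw [abs_of_pos (by linarith : (0:ℝ) < a - b)]
  rw [abs_lt]; constructor <;> linarith

lemma double_split {m : ℕ} (i i' : Fin m) (hne : i ≠ i') (f : Fin m → Fin m → ℝ) :
    ∑ x : Fin m, ∑ y : Fin m, f x y =
      (∑ x ∈ Finset.univ \ {i,i'}, ∑ y ∈ Finset.univ \ {i,i'}, f x y)
      + (∑ x ∈ Finset.univ \ {i,i'}, (f x i + f x i'))
      + (∑ y ∈ Finset.univ \ {i,i'}, (f i y + f i' y))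
      + (f i i + f i i' + f i' i + f i' i') := by
  have hsub : ({i, i'} : Finset (Fin m)) ⊆ univ := subset_univ _
  have inner : ∀ x, ∑ y : Fin m, f x y = ∑ y ∈ univ \ {i,i'}, f x y + (f x i + f x i') := by
    intro x
    rw [← Finset.sum_sdiff hsub, Finset.sum_pair hne]
  rw [Finset.sum_congr rfl fun x _ => inner x]
  rw [← Finset.sum_sdiff hsub, Finset.sum_pair hne, Finset.sum_add_distrib]
  rw [Finset.sum_add_distrib, Finset.sum_add_distrib]; ring


/-- Every improving `k`-swap strictly decreases the potential `Φ`. -/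
theorem potential_strict_decrease {n m k : ℕ} (hm : 2 ≤ m) (hk : 1 ≤ k)
    (p : Fin n → ℝ) (hp : ∀ j, 0 < p j)
    (σ σ' : Fin n → Fin m)
    (h : ∃ (i i' : Fin m) (A B : Finset (Fin n)), IsImprovingKSwap k p σ σ' i i' A B) :
    potential p σ' < potential p σ := by
  obtain ⟨i, i', A, B, hcrit, hne, hAB, hAi, hBi', hA1, hk', hpos, hlt, hA', hB', hrest⟩ := h
  set pA := ∑ j ∈ A, p j with hpA
  set pB := ∑ j ∈ B, p j with hpB
  set d := pA - pB with hdd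
  have hd0 : 0 < d := hpos
  have hdab : d < load p σ i - load p σ i' := hlt
  -- load of i under σ'
  have hAsub : A ⊆ univ.filter (fun j => σ j = i) :=
    fun j hj => mem_filter.mpr ⟨mem_univ j, hAi j hj⟩
  have hBsub : B ⊆ univ.filter (fun j => σ j = i') :=
    fun j hj => mem_filter.mpr ⟨mem_univ j, hBi' j hj⟩
  have hfi : univ.filter (fun j => σ' j = i) = (univ.filter (fun j => σ j = i) \ A) ∪ B := by
    ext j
    simp only [mem_union, mem_sdiff, mem_filter, mem_univ, true_and]
    constructor
    · intro hj
      by_cases hjA : j ∈ A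
      · exact absurd ((hA' j hjA).symm.trans hj) hne
      · by_cases hjB : j ∈ B
        · exact Or.inr hjB
        · exact Or.inl ⟨(hrest j hjA hjB).symm.trans hj, hjA⟩
    · rintro (⟨hσj, hjA⟩ | hjB)
      · have hjB : j ∉ B := fun hjB => hne ((hBi' j hjB).symm.trans hσj)
        exact (hrest j hjA hjB).trans hσj
      · exact hB' j hjB
  have hdisj : Disjoint (univ.filter (fun j => σ j = i) \ A) B := by
    rw [Finset.disjoint_left]
    intro j hj hjB
    exact hne ((hBi' j hjB).symm.trans (mem_filter.mp (mem_sdiff.mp hj).1).2)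
  have hLa : load p σ' i = load p σ i - d := by
    unfold load
    rw [hfi, Finset.sum_union hdisj, Finset.sum_sdiff_eq_sub hAsub]
    rw [hdd, hpA, hpB]; ring
  -- load of i' under σ'
  have hfi' : univ.filter (fun j => σ' j = i') = (univ.filter (fun j => σ j = i') \ B) ∪ A := by
    ext j
    simp only [mem_union, mem_sdiff, mem_filter, mem_univ, true_and]
    constructor
    · intro hj
      by_cases hjB : j ∈ B
      · exact absurd ((hB' j hjB).symm.trans hj).symm hne
      · by_cases hjA : j ∈ A
        · exact Or.inr hjA
        · exact Or.inl ⟨(hrest j hjA hjB).symm.trans hj, hjB⟩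
    · rintro (⟨hσj, hjB⟩ | hjA)
      · have hjA : j ∉ A := fun hjA => hne ((hAi j hjA).symm.trans hσj).symm
        exact (hrest j hjA hjB).trans hσj
      · exact hA' j hjA
  have hdisj' : Disjoint (univ.filter (fun j => σ j = i') \ B) A := by
    rw [Finset.disjoint_left]
    intro j hj hjA
    exact hne ((mem_filter.mp (mem_sdiff.mp hj).1).2.symm.trans (hAi j hjA))
  have hLb : load p σ' i' = load p σ i' + d := by
    unfold load
    rw [hfi', Finset.sum_union hdisj', Finset.sum_sdiff_eq_sub hBsub]
    rw [hdd, hpA, hpB]; ring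
  -- loads of other machines unchanged
  have hLother : ∀ c, c ≠ i → c ≠ i' → load p σ' c = load p σ c := by
    intro c hci hci'
    unfold load
    congr 1
    ext j
    simp only [mem_filter, mem_univ, true_and]
    by_cases hjA : j ∈ A
    · rw [hA' j hjA, hAi j hjA]
      constructor <;> intro hh
      · exact absurd hh.symm hci'
      · exact absurd hh.symm hci
    · by_cases hjB : j ∈ B
      · rw [hB' j hjB, hBi' j hjB]
        constructor <;> intro hh
        · exact absurd hh.symm hci
        · exact absurd hh.symm hci'
      · rw [hrest j hjA hjB]
  set a := load p σ i with ha
  set b := load p σ i' with hb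
  have hne' : i ≠ i' := Ne.symm hne
  have hmemS : ∀ x : Fin m, x ∈ univ \ ({i, i'} : Finset (Fin m)) → x ≠ i ∧ x ≠ i' := by
    intro x hx
    simp only [mem_sdiff, mem_univ, true_and, mem_insert, mem_singleton, not_or] at hx
    exact hx
  unfold potential
  rw [double_split i i' hne' (fun x y => |load p σ' x - load p σ' y|),
      double_split i i' hne' (fun x y => |load p σ x - load p σ y|)]
  have e1 : (∑ x ∈ univ \ {i,i'}, ∑ y ∈ univ \ {i,i'}, |load p σ' x - load p σ' y|)
      = ∑ x ∈ univ \ {i,i'}, ∑ y ∈ univ \ {i,i'}, |load p σ x - load p σ y| := by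
    apply Finset.sum_congr rfl
    intro x hx
    apply Finset.sum_congr rfl
    intro y hy
    rw [hLother x (hmemS x hx).1 (hmemS x hx).2, hLother y (hmemS y hy).1 (hmemS y hy).2]
  have e2 : (∑ x ∈ univ \ {i,i'}, (|load p σ' x - load p σ' i| + |load p σ' x - load p σ' i'|))
      ≤ ∑ x ∈ univ \ {i,i'}, (|load p σ x - load p σ i| + |load p σ x - load p σ i'|) := by
    apply Finset.sum_le_sum
    intro x hx
    rw [hLother x (hmemS x hx).1 (hmemS x hx).2, hLa, hLb,
        abs_sub_comm (load p σ x) (a - d), abs_sub_comm (load p σ x) (b + d),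
        abs_sub_comm (load p σ x) a, abs_sub_comm (load p σ x) b]
    exact key_abs a b (load p σ x) d hd0 hdab
  have e3 : (∑ y ∈ univ \ {i,i'}, (|load p σ' i - load p σ' y| + |load p σ' i' - load p σ' y|))
      ≤ ∑ y ∈ univ \ {i,i'}, (|load p σ i - load p σ y| + |load p σ i' - load p σ y|) := by
    apply Finset.sum_le_sum
    intro y hy
    rw [hLother y (hmemS y hy).1 (hmemS y hy).2, hLa, hLb]
    exact key_abs a b (load p σ y) d hd0 hdab
  have e4 : (|load p σ' i - load p σ' i| + |load p σ' i - load p σ' i'| +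
      |load p σ' i' - load p σ' i| + |load p σ' i' - load p σ' i'|)
      < |load p σ i - load p σ i| + |load p σ i - load p σ i'| +
        |load p σ i' - load p σ i| + |load p σ i' - load p σ i'| := by
    rw [hLa, hLb, sub_self, sub_self, sub_self, sub_self, abs_zero,
        abs_sub_comm (b + d) (a - d), abs_sub_comm b a]
    have := key_strict a b d hd0 hdab
    linarith
  linarith [e1, e2, e3, e4]
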